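/- Let t ∈ ℕ with t ≥ 1, and let a_1, …, a_{q^t} be real numbers. Then ∫_{{(x₁,x₂) ∈ ℚ_q² : max(|x₁|,|x₂|) ≤ q^{10t}}} |∑_{n=1}^{q^t} a_n χ(n x₁ + n² x₂)|⁶ dμ²(x₁,x₂) = q^{20t} ∫_{[0,1]²} |∑_{n=1}^{q^t} a_n e(n y₁ + n² y₂)|⁶ dy₁ dy₂, where in the q-adic integrand the natural numbers n and n² are regarded as elements of ℤ_q via the canonical embedding, and e(z) := e^{2πiz}. -/

import Mathlib

open MeasureTheory

noncomputable instance (q : ℕ) [Fact q.Prime] : MeasurableSpace ℚ_[q] := borel _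
instance (q : ℕ) [Fact q.Prime] : BorelSpace ℚ_[q] := ⟨rfl⟩



lemma ball_meas (q : ℕ) [Fact q.Prime] (μ : Measure ℚ_[q]) [μ.IsAddHaarMeasure]
    (hμ : μ {x : ℚ_[q] | ‖x‖ ≤ 1} = 1) (N : ℕ) :
    μ {x : ℚ_[q] | ‖x‖ ≤ (q : ℝ) ^ (N : ℤ)} = (q ^ N : ℕ) := by
  have hq1 : 1 < q := (Fact.out : q.Prime).one_lt
  have hqR : (1 : ℝ) < (q : ℝ) := by exact_mod_cast hq1
  have hqR0 : (0 : ℝ) < (q : ℝ) := by positivity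
  have hq0 : (q : ℚ_[q]) ≠ 0 := by exact_mod_cast Nat.cast_ne_zero.mpr (by omega)
  set c : ℕ → ℚ_[q] := fun k => (k : ℚ_[q]) * (q : ℚ_[q]) ^ (-(N : ℤ)) with hc
  set S : ℕ → Set ℚ_[q] := fun k => {x | ‖x - c k‖ ≤ 1} with hS
  have hSm : ∀ k, MeasurableSet (S k) := by
    intro k
    have : S k = Metric.closedBall (c k) 1 := by
      ext x; simp [hS, Metric.mem_closedBall, dist_eq_norm]
    rw [this]; exact measurableSet_closedBall
  have hcover : {x : ℚ_[q] | ‖x‖ ≤ (q : ℝ) ^ (N : ℤ)} = ⋃ k ∈ Finset.range (q ^ N), S k := by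
    ext x
    simp only [Set.mem_setOf_eq, Set.mem_iUnion, Finset.mem_range, exists_prop]
    constructor
    · intro hx
      have hu : ‖x * (q : ℚ_[q]) ^ N‖ ≤ 1 := by
        rw [norm_mul, Padic.norm_p_pow]
        calc ‖x‖ * (q : ℝ) ^ (-N : ℤ) ≤ (q : ℝ) ^ (N : ℤ) * (q : ℝ) ^ (-N : ℤ) := by
              apply mul_le_mul_of_nonneg_right hx (zpow_nonneg (by positivity) _)
          _ = 1 := by rw [← zpow_add₀ hqR0.ne']; simp
      set z : ℤ_[q] := ⟨x * (q : ℚ_[q]) ^ N, hu⟩ with hz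
      refine ⟨z.appr N, PadicInt.appr_lt z N, ?_⟩
      have hspec := PadicInt.appr_spec N z
      rw [Ideal.mem_span_singleton] at hspec
      obtain ⟨w, hw⟩ := hspec
      have hnorm1 : ‖z - (z.appr N : ℤ_[q])‖ ≤ (q : ℝ) ^ (-N : ℤ) := by
        rw [hw, norm_mul, PadicInt.norm_p_pow]
        calc (q:ℝ) ^ (-N:ℤ) * ‖w‖ ≤ (q:ℝ) ^ (-N:ℤ) * 1 :=
              mul_le_mul_of_nonneg_left w.2 (zpow_nonneg (by positivity) _)
          _ = _ := mul_one _
      have hqpow : (q : ℚ_[q]) ^ (N : ℕ) * (q : ℚ_[q]) ^ (-(N:ℤ)) = 1 := by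
        rw [← zpow_natCast, ← zpow_add₀ hq0]; simp
      have hxc : x - c (z.appr N) = ((z : ℚ_[q]) - (z.appr N : ℚ_[q])) * (q : ℚ_[q]) ^ (-(N:ℤ)) := by
        have hx' : (z : ℚ_[q]) = x * (q : ℚ_[q]) ^ N := rfl
        rw [hx', hc]
        calc x - (z.appr N : ℚ_[q]) * (q:ℚ_[q])^(-(N:ℤ))
            = x * ((q:ℚ_[q])^(N:ℕ) * (q:ℚ_[q])^(-(N:ℤ))) - (z.appr N : ℚ_[q]) * (q:ℚ_[q])^(-(N:ℤ)) := by
              rw [hqpow, mul_one]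
          _ = (x * (q:ℚ_[q])^(N:ℕ) - (z.appr N : ℚ_[q])) * (q:ℚ_[q])^(-(N:ℤ)) := by ring
      rw [hS]
      simp only [Set.mem_setOf_eq]
      rw [hxc, norm_mul, Padic.norm_p_zpow, neg_neg]
      have : ‖(z : ℚ_[q]) - (z.appr N : ℚ_[q])‖ ≤ (q : ℝ) ^ (-N : ℤ) := by
        have := hnorm1
        rwa [PadicInt.norm_def, PadicInt.coe_sub] at this
        
      calc ‖(z : ℚ_[q]) - (z.appr N : ℚ_[q])‖ * (q:ℝ) ^ (N:ℤ)
          ≤ (q:ℝ) ^ (-N:ℤ) * (q:ℝ) ^ (N:ℤ) :=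
            mul_le_mul_of_nonneg_right this (zpow_nonneg (by positivity) _)
        _ = 1 := by rw [← zpow_add₀ hqR0.ne']; simp
    · intro ⟨k, hk, hxk⟩
      have h1 : ‖c k‖ ≤ (q : ℝ) ^ (N : ℤ) := by
        rw [hc]
        simp only [norm_mul, Padic.norm_p_zpow, neg_neg]
        calc ‖(k : ℚ_[q])‖ * (q : ℝ) ^ (N : ℤ) ≤ 1 * (q : ℝ) ^ (N : ℤ) := by
              apply mul_le_mul_of_nonneg_right _ (zpow_nonneg (by positivity) _)
              have := Padic.norm_int_le_one (p := q) (k : ℤ)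
              simpa using this
          _ = _ := one_mul _
      have h2 : (1 : ℝ) ≤ (q : ℝ) ^ (N : ℤ) := one_le_zpow₀ hqR.le (by positivity)
      calc ‖x‖ = ‖(x - c k) + c k‖ := by ring_nf
        _ ≤ max ‖x - c k‖ ‖c k‖ := Padic.nonarchimedean _ _
        _ ≤ (q : ℝ) ^ (N : ℤ) := max_le (le_trans hxk h2) h1
  have hdisj : (↑(Finset.range (q ^ N)) : Set ℕ).PairwiseDisjoint S := by
    intro k hk l hl hkl
    simp only [Finset.coe_range, Set.mem_Iio] at hk hl
    rw [Function.onFun, Set.disjoint_left]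
    intro x hxk hxl
    have hd : ‖c k - c l‖ ≤ 1 := by
      calc ‖c k - c l‖ = ‖(x - c l) - (x - c k)‖ := by ring_nf
        _ ≤ max ‖x - c l‖ ‖-(x - c k)‖ := by
            rw [sub_eq_add_neg]; exact Padic.nonarchimedean _ _
        _ ≤ 1 := max_le hxl (by rwa [norm_neg])
    have hnd : ¬ ((q : ℤ) ^ N ∣ ((k : ℤ) - l)) := by
      intro hdvd
      have h0 : (k : ℤ) - l ≠ 0 := by
        intro h; apply hkl; omega
      have hle : (q:ℤ)^N ≤ |(k:ℤ) - l| :=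
        Int.le_of_dvd (abs_pos.mpr h0) ((dvd_abs _ _).mpr hdvd)
      have hkz : (k:ℤ) < ((q^N : ℕ) : ℤ) := by exact_mod_cast hk
      have hlz : (l:ℤ) < ((q^N : ℕ) : ℤ) := by exact_mod_cast hl
      have hcast : ((q^N : ℕ) : ℤ) = (q:ℤ)^N := by push_cast; ring
      have h2 : |(k:ℤ) - l| < (q:ℤ)^N := by
        rw [abs_lt]; omega
      linarith
    have hge : ¬ (‖((((k:ℤ) - l : ℤ)) : ℚ_[q])‖ ≤ (q : ℝ) ^ (-(N:ℤ))) := by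
      rw [Padic.norm_int_le_pow_iff_dvd]
      exact_mod_cast hnd
    push_neg at hge
    have : ‖c k - c l‖ = ‖(((k:ℤ) - l : ℤ) : ℚ_[q])‖ * (q : ℝ) ^ (N : ℤ) := by
      rw [hc]
      have : (k : ℚ_[q]) * (q:ℚ_[q]) ^ (-(N:ℤ)) - l * (q:ℚ_[q]) ^ (-(N:ℤ))
          = (((k:ℤ) - l : ℤ) : ℚ_[q]) * (q:ℚ_[q]) ^ (-(N:ℤ)) := by push_cast; ring
      rw [this, norm_mul, Padic.norm_p_zpow, neg_neg]
    rw [this] at hd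
    have : (1:ℝ) < ‖(((k:ℤ) - l : ℤ) : ℚ_[q])‖ * (q : ℝ) ^ (N : ℤ) := by
      have h1 : (q:ℝ) ^ (-(N:ℤ)) * (q:ℝ) ^ (N:ℤ) = 1 := by rw [← zpow_add₀ hqR0.ne']; simp
      calc (1:ℝ) = (q:ℝ) ^ (-(N:ℤ)) * (q:ℝ) ^ (N:ℤ) := h1.symm
        _ < _ := by
            apply mul_lt_mul_of_pos_right hge (by positivity)
    linarith
  rw [hcover, measure_biUnion_finset hdisj (fun k _ => hSm k)]
  have hone : ∀ k, μ (S k) = 1 := by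
    intro k
    have : S k = (fun x => -c k + x) ⁻¹' {x : ℚ_[q] | ‖x‖ ≤ 1} := by
      ext x; simp only [hS, Set.mem_setOf_eq, Set.mem_preimage]
      rw [neg_add_eq_sub]
    rw [this, measure_preimage_add, hμ]
  simp [hone]



lemma char_cont (q : ℕ) [Fact q.Prime] (χ : ℚ_[q] → ℂ)
    (hχ_mul : ∀ x y : ℚ_[q], χ (x + y) = χ x * χ y)
    (hχ_triv : ∀ x : ℚ_[q], ‖x‖ ≤ 1 → χ x = 1) : Continuous χ := by
  rw [continuous_iff_continuousAt]
  intro x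
  have h : χ =ᶠ[nhds x] fun _ => χ x := by
    filter_upwards [Metric.closedBall_mem_nhds x one_pos] with y hy
    have h1 : ‖y - x‖ ≤ 1 := by
      rw [Metric.mem_closedBall, dist_eq_norm] at hy; exact hy
    calc χ y = χ (x + (y - x)) := by ring_nf
      _ = χ x * χ (y - x) := hχ_mul _ _
      _ = χ x := by rw [hχ_triv _ h1, mul_one]
  exact h.continuousAt

lemma char_int_zero (q : ℕ) [Fact q.Prime]
    (μ : Measure ℚ_[q]) [μ.IsAddHaarMeasure]
    (χ : ℚ_[q] → ℂ)
    (hχ_mul : ∀ x y : ℚ_[q], χ (x + y) = χ x * χ y)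
    (hχ_norm : ∀ x : ℚ_[q], ‖χ x‖ = 1)
    (hχ_triv : ∀ x : ℚ_[q], ‖x‖ ≤ 1 → χ x = 1)
    (hχ_nontriv : ∃ x : ℚ_[q], ‖x‖ ≤ (q : ℝ) ∧ χ x ≠ 1)
    (N : ℕ) (c : ℚ_[q]) (hc : (q : ℝ) ^ (-(N : ℤ)) < ‖c‖) :
    ∫ x in {x : ℚ_[q] | ‖x‖ ≤ (q : ℝ) ^ (N : ℤ)}, χ (c * x) ∂μ = 0 := by
  have hq1 : 1 < q := (Fact.out : q.Prime).one_lt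
  have hqR : (1 : ℝ) < (q : ℝ) := by exact_mod_cast hq1
  have hqR0 : (0 : ℝ) < (q : ℝ) := by positivity
  have hc0 : c ≠ 0 := by
    intro h; rw [h, norm_zero] at hc
    exact absurd hc (not_lt.mpr (zpow_nonneg hqR0.le _))
  obtain ⟨x₀, hx₀n, hx₀⟩ := hχ_nontriv
  -- ‖c‖ = q ^ (-v) with -v ≥ 1 - N
  have hval : ‖c‖ = (q : ℝ) ^ (-c.valuation) := Padic.norm_eq_zpow_neg_valuation hc0
  have hvN : -c.valuation ≥ 1 - (N : ℤ) := by
    by_contra hlt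
    push_neg at hlt
    have : -c.valuation ≤ -(N:ℤ) := by omega
    have : ‖c‖ ≤ (q:ℝ) ^ (-(N:ℤ)) := by
      rw [hval]; exact zpow_le_zpow_right₀ hqR.le this
    linarith
  set y : ℚ_[q] := x₀ / c with hy
  have hyn : ‖y‖ ≤ (q : ℝ) ^ (N : ℤ) := by
    rw [hy, norm_div, hval]
    rw [div_le_iff₀ (by positivity)]
    calc ‖x₀‖ ≤ (q:ℝ) := hx₀n
      _ = (q:ℝ) ^ (1:ℤ) := (zpow_one _).symm
      _ ≤ (q:ℝ) ^ ((N:ℤ) + (-c.valuation)) := by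
          apply zpow_le_zpow_right₀ hqR.le; omega
      _ = (q:ℝ) ^ (N:ℤ) * (q:ℝ) ^ (-c.valuation) := zpow_add₀ hqR0.ne' _ _
  have hcy : c * y = x₀ := by rw [hy]; field_simp
  set B : Set ℚ_[q] := {x | ‖x‖ ≤ (q : ℝ) ^ (N : ℤ)} with hB
  have hBm : MeasurableSet B := by
    have : B = Metric.closedBall 0 ((q:ℝ) ^ (N:ℤ)) := by
      ext x; simp [hB, Metric.mem_closedBall, dist_eq_norm]
    rw [this]; exact measurableSet_closedBall
  set f : ℚ_[q] → ℂ := B.indicator (fun x => χ (c * x)) with hf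
  have key : ∀ x, f (x + y) = χ (c * y) * f x := by
    intro x
    have hmem : x + y ∈ B ↔ x ∈ B := by
      simp only [hB, Set.mem_setOf_eq]
      constructor
      · intro h
        calc ‖x‖ = ‖(x + y) + (-y)‖ := by ring_nf
          _ ≤ max ‖x + y‖ ‖-y‖ := Padic.nonarchimedean _ _
          _ ≤ _ := max_le h (by rwa [norm_neg])
      · intro h
        calc ‖x + y‖ ≤ max ‖x‖ ‖y‖ := Padic.nonarchimedean _ _
          _ ≤ _ := max_le h hyn
    by_cases hx : x ∈ B
    · rw [hf, Set.indicator_of_mem (hmem.mpr hx), Set.indicator_of_mem hx]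
      rw [mul_add, hχ_mul, mul_comm]
    · rw [hf, Set.indicator_of_notMem (fun h => hx (hmem.mp h)),
        Set.indicator_of_notMem hx, mul_zero]
  have h1 : ∫ x in B, χ (c * x) ∂μ = ∫ x, f x ∂μ := (integral_indicator hBm).symm
  have h2 : ∫ x, f x ∂μ = ∫ x, f (x + y) ∂μ := (integral_add_right_eq_self f y).symm
  have h3 : ∫ x, f (x + y) ∂μ = χ (c * y) * ∫ x, f x ∂μ := by
    simp only [key]
    exact integral_const_mul _ _
  have hI : ∫ x in B, χ (c * x) ∂μ = χ (c * y) * ∫ x in B, χ (c * x) ∂μ := by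
    calc ∫ x in B, χ (c * x) ∂μ = ∫ x, f x ∂μ := h1
      _ = ∫ x, f (x + y) ∂μ := h2
      _ = χ (c * y) * ∫ x, f x ∂μ := h3
      _ = χ (c * y) * ∫ x in B, χ (c * x) ∂μ := by rw [← h1]
  have hne : χ (c * y) ≠ 1 := by rwa [hcy]
  have := sub_eq_zero.mpr hI.symm
  rw [show χ (c*y) * ∫ x in B, χ (c * x) ∂μ - ∫ x in B, χ (c * x) ∂μ
      = (χ (c*y) - 1) * ∫ x in B, χ (c * x) ∂μ by ring] at this
  rcases mul_eq_zero.mp this with h | h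
  · exact absurd (sub_eq_zero.mp h) hne
  · exact h


section Key
variable {α β : Type*} [MeasurableSpace α] [MeasurableSpace β]

/-- Generic L⁶ orthogonality expansion. -/
theorem key_L6 (ν₁ : Measure α) (ν₂ : Measure β) [SigmaFinite ν₁] [SigmaFinite ν₂]
    (s₁ : Set α) (s₂ : Set β)
    (hf₁ : ν₁ s₁ < ⊤) (hf₂ : ν₂ s₂ < ⊤)
    (E₁ : ℤ → α → ℂ) (E₂ : ℤ → β → ℂ)
    (hadd₁ : ∀ m m' x, E₁ (m + m') x = E₁ m x * E₁ m' x)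
    (hadd₂ : ∀ m m' x, E₂ (m + m') x = E₂ m x * E₂ m' x)
    (hconj₁ : ∀ m x, (starRingEnd ℂ) (E₁ m x) = E₁ (-m) x)
    (hconj₂ : ∀ m x, (starRingEnd ℂ) (E₂ m x) = E₂ (-m) x)
    (hnorm₁ : ∀ m x, ‖E₁ m x‖ = 1)
    (hnorm₂ : ∀ m x, ‖E₂ m x‖ = 1)
    (hmeas₁ : ∀ m, Measurable (E₁ m))
    (hmeas₂ : ∀ m, Measurable (E₂ m))
    (Q : ℕ) (a : ℕ → ℝ) (c₁ c₂ : ℝ)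
    (hc₁ : ∫ x in s₁, (1 : ℂ) ∂ν₁ = (c₁ : ℂ))
    (hc₂ : ∫ x in s₂, (1 : ℂ) ∂ν₂ = (c₂ : ℂ))
    (horth₁ : ∀ m : ℤ, m ≠ 0 → |m| ≤ 3 * Q + 3 * Q ^ 2 → ∫ x in s₁, E₁ m x ∂ν₁ = 0)
    (horth₂ : ∀ m : ℤ, m ≠ 0 → |m| ≤ 3 * Q + 3 * Q ^ 2 → ∫ x in s₂, E₂ m x ∂ν₂ = 0) :
    ∫ x in s₁ ×ˢ s₂,
        ‖∑ n ∈ Finset.Icc 1 Q, (a n : ℂ) * (E₁ (n : ℤ) x.1 * E₂ ((n : ℤ) ^ 2) x.2)‖ ^ 6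
        ∂(ν₁.prod ν₂)
      = ∑ p ∈ (Finset.Icc 1 Q) ×ˢ (Finset.Icc 1 Q) ×ˢ (Finset.Icc 1 Q) ×ˢ (Finset.Icc 1 Q) ×ˢ
            (Finset.Icc 1 Q) ×ˢ (Finset.Icc 1 Q),
          (if ((p.2.2.2.2.2 : ℤ) + p.2.2.2.2.1 + p.2.2.2.1 - p.2.2.1 - p.2.1 - p.1 = 0 ∧
               (p.2.2.2.2.2 : ℤ) ^ 2 + (p.2.2.2.2.1 : ℤ) ^ 2 + (p.2.2.2.1 : ℤ) ^ 2
                 - (p.2.2.1 : ℤ) ^ 2 - (p.2.1 : ℤ) ^ 2 - (p.1 : ℤ) ^ 2 = 0)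
            then c₁ * c₂ * (a p.2.2.2.2.2 * a p.2.2.2.2.1 * a p.2.2.2.1 *
                  a p.2.2.1 * a p.2.1 * a p.1)
            else 0) := by
  classical
  set I : Finset ℕ := Finset.Icc 1 Q with hI
  set P : Finset (ℕ × ℕ × ℕ × ℕ × ℕ × ℕ) := I ×ˢ I ×ˢ I ×ˢ I ×ˢ I ×ˢ I with hP
  set M1 : ℕ × ℕ × ℕ × ℕ × ℕ × ℕ → ℤ := fun p =>
    (p.2.2.2.2.2 : ℤ) + p.2.2.2.2.1 + p.2.2.2.1 - p.2.2.1 - p.2.1 - p.1 with hM1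
  set M2 : ℕ × ℕ × ℕ × ℕ × ℕ × ℕ → ℤ := fun p =>
    (p.2.2.2.2.2 : ℤ) ^ 2 + (p.2.2.2.2.1 : ℤ) ^ 2 + (p.2.2.2.1 : ℤ) ^ 2
      - (p.2.2.1 : ℤ) ^ 2 - (p.2.1 : ℤ) ^ 2 - (p.1 : ℤ) ^ 2 with hM2
  set A : ℕ × ℕ × ℕ × ℕ × ℕ × ℕ → ℝ := fun p =>
    a p.2.2.2.2.2 * a p.2.2.2.2.1 * a p.2.2.2.1 * a p.2.2.1 * a p.2.1 * a p.1 with hA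
  set T : (ℕ × ℕ × ℕ × ℕ × ℕ × ℕ) → α × β → ℂ := fun p x =>
    ((A p : ℝ) : ℂ) * (E₁ (M1 p) x.1 * E₂ (M2 p) x.2) with hT
  -- pointwise expansion
  have hpt : ∀ x : α × β,
      ‖∑ n ∈ I, (a n : ℂ) * (E₁ (n : ℤ) x.1 * E₂ ((n : ℤ) ^ 2) x.2)‖ ^ 6
        = (∑ p ∈ P, T p x).re := by
    intro x
    set b : ℕ → ℂ := fun n => (a n : ℂ) * (E₁ (n : ℤ) x.1 * E₂ ((n : ℤ) ^ 2) x.2) with hb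
    set cb : ℕ → ℂ := fun n => (a n : ℂ) * (E₁ (-(n : ℤ)) x.1 * E₂ (-((n : ℤ) ^ 2)) x.2) with hcb
    set S : ℂ := ∑ n ∈ I, b n with hSdef
    have hconjS : (starRingEnd ℂ) S = ∑ n ∈ I, cb n := by
      rw [hSdef, map_sum]
      refine Finset.sum_congr rfl fun n _ => ?_
      rw [hb, hcb]
      simp only [map_mul, Complex.conj_ofReal, hconj₁, hconj₂]
    have hexp : (S * (starRingEnd ℂ) S) ^ 3 = ∑ p ∈ P, T p x := by
      have h6 : (S * (starRingEnd ℂ) S) ^ 3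
          = S * S * S * (starRingEnd ℂ) S * (starRingEnd ℂ) S * (starRingEnd ℂ) S := by ring
      rw [h6, hconjS, hSdef]
      have hexpand : (∑ i ∈ I, b i) * (∑ i ∈ I, b i) * (∑ i ∈ I, b i) * (∑ i ∈ I, cb i) *
            (∑ i ∈ I, cb i) * (∑ i ∈ I, cb i)
          = ∑ p ∈ P, b p.2.2.2.2.2 * b p.2.2.2.2.1 * b p.2.2.2.1 * cb p.2.2.1 * cb p.2.1 *
              cb p.1 := by
        rw [hP]
        simp only [Finset.sum_product]
        simp only [Finset.sum_mul, Finset.mul_sum]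
      rw [hexpand]
      refine Finset.sum_congr rfl fun p _ => ?_
      obtain ⟨u1, u2, u3, u4, u5, u6⟩ := p
      simp only [hb, hcb, hT, hA, hM1, hM2]
      have e1 : E₁ ((u6:ℤ) + u5 + u4 - u3 - u2 - u1) x.1
          = E₁ (u6 : ℤ) x.1 * E₁ (u5 : ℤ) x.1 * E₁ (u4 : ℤ) x.1 *
            E₁ (-(u3 : ℤ)) x.1 * E₁ (-(u2 : ℤ)) x.1 * E₁ (-(u1 : ℤ)) x.1 := by
        rw [show ((u6:ℤ) + u5 + u4 - u3 - u2 - u1)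
            = (u6:ℤ) + u5 + u4 + (-(u3:ℤ)) + (-(u2:ℤ)) + (-(u1:ℤ)) by ring,
          hadd₁, hadd₁, hadd₁, hadd₁, hadd₁]
      have e2 : E₂ ((u6:ℤ)^2 + (u5:ℤ)^2 + (u4:ℤ)^2 - (u3:ℤ)^2 - (u2:ℤ)^2 - (u1:ℤ)^2) x.2
          = E₂ ((u6 : ℤ)^2) x.2 * E₂ ((u5 : ℤ)^2) x.2 * E₂ ((u4 : ℤ)^2) x.2 *
            E₂ (-((u3 : ℤ)^2)) x.2 * E₂ (-((u2 : ℤ)^2)) x.2 * E₂ (-((u1 : ℤ)^2)) x.2 := by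
        rw [show ((u6:ℤ)^2 + (u5:ℤ)^2 + (u4:ℤ)^2 - (u3:ℤ)^2 - (u2:ℤ)^2 - (u1:ℤ)^2)
            = (u6:ℤ)^2 + (u5:ℤ)^2 + (u4:ℤ)^2 + (-((u3:ℤ)^2)) + (-((u2:ℤ)^2)) + (-((u1:ℤ)^2))
            by ring,
          hadd₂, hadd₂, hadd₂, hadd₂, hadd₂]
      rw [e1, e2]
      push_cast
      ring
    have hre : ‖S‖ ^ 6 = ((S * (starRingEnd ℂ) S) ^ 3).re := by
      rw [Complex.mul_conj]
      have : ((Complex.normSq S : ℂ)) ^ 3 = ((Complex.normSq S ^ 3 : ℝ) : ℂ) := by push_cast; ring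
      rw [this, Complex.ofReal_re, Complex.normSq_eq_norm_sq]
      ring
    rw [hre, hexp]
  simp only [hpt]
  -- pass to product of restricted measures
  rw [← Measure.prod_restrict]
  set π : Measure (α × β) := (ν₁.restrict s₁).prod (ν₂.restrict s₂) with hπ
  haveI : IsFiniteMeasure (ν₁.restrict s₁) :=
    ⟨by rwa [Measure.restrict_apply_univ]⟩
  haveI : IsFiniteMeasure (ν₂.restrict s₂) :=
    ⟨by rwa [Measure.restrict_apply_univ]⟩
  have hTmeas : ∀ p, Measurable (T p) := by
    intro p
    exact measurable_const.mul (((hmeas₁ (M1 p)).comp measurable_fst).mul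
      ((hmeas₂ (M2 p)).comp measurable_snd))
  have hTint : ∀ p ∈ P, Integrable (T p) π := by
    intro p _
    refine Integrable.mono' (integrable_const ‖A p‖) (hTmeas p).aestronglyMeasurable ?_
    filter_upwards with x
    rw [hT]
    simp only [norm_mul, hnorm₁, hnorm₂, Complex.norm_real]
    simp [Real.norm_eq_abs]
  have hE₁0 : ∀ x, E₁ 0 x = 1 := by
    intro x
    have h := hadd₁ 0 0 x
    rw [add_zero] at h
    have hn0 : E₁ 0 x ≠ 0 := by
      intro h'
      have := hnorm₁ 0 x
      rw [h', norm_zero] at this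
      exact one_ne_zero this.symm
    have : (1 : ℂ) * E₁ 0 x = E₁ 0 x * E₁ 0 x := by rw [one_mul]; exact h
    exact (mul_right_cancel₀ hn0 this).symm
  have hE₂0 : ∀ x, E₂ 0 x = 1 := by
    intro x
    have h := hadd₂ 0 0 x
    rw [add_zero] at h
    have hn0 : E₂ 0 x ≠ 0 := by
      intro h'
      have := hnorm₂ 0 x
      rw [h', norm_zero] at this
      exact one_ne_zero this.symm
    have : (1 : ℂ) * E₂ 0 x = E₂ 0 x * E₂ 0 x := by rw [one_mul]; exact h
    exact (mul_right_cancel₀ hn0 this).symm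
  have hmain : ∀ p ∈ P, (∫ x, T p x ∂π).re
      = (if (M1 p = 0 ∧ M2 p = 0)
          then c₁ * c₂ * A p
          else 0) := by
    intro p hp
    obtain ⟨u1, u2, u3, u4, u5, u6⟩ := p
    set p : ℕ × ℕ × ℕ × ℕ × ℕ × ℕ := (u1, u2, u3, u4, u5, u6) with hpdef
    have hint : ∫ x, T p x ∂π
        = ((A p : ℝ) : ℂ) * ((∫ x in s₁, E₁ (M1 p) x ∂ν₁) * (∫ y in s₂, E₂ (M2 p) y ∂ν₂)) := by
      rw [hT, hπ]
      rw [integral_const_mul]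
      rw [integral_prod_mul (E₁ (M1 p)) (E₂ (M2 p))]
    -- bounds on M1 p, M2 p
    simp only [hP, hI, Finset.mem_product, Finset.mem_Icc] at hp
    obtain ⟨⟨h11, h12⟩, ⟨h21, h22⟩, ⟨h31, h32⟩, ⟨h41, h42⟩, ⟨h51, h52⟩, h61, h62⟩ := hp
    have hz : ∀ n : ℕ, 1 ≤ n → n ≤ Q → ((1:ℤ) ≤ (n:ℤ) ∧ (n:ℤ) ≤ (Q:ℤ) ∧
        (1:ℤ) ≤ (n:ℤ)^2 ∧ (n:ℤ)^2 ≤ (Q:ℤ)^2) := by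
      intro n h1 h2
      have ha : (1:ℤ) ≤ (n:ℤ) := by exact_mod_cast h1
      have hb : (n:ℤ) ≤ (Q:ℤ) := by exact_mod_cast h2
      refine ⟨ha, hb, one_le_pow₀ ha, ?_⟩
      exact pow_le_pow_left₀ (by linarith) hb 2
    obtain ⟨ha1, hb1, hc1, hd1⟩ := hz _ h11 h12
    obtain ⟨ha2, hb2, hc2, hd2⟩ := hz _ h21 h22
    obtain ⟨ha3, hb3, hc3, hd3⟩ := hz _ h31 h32
    obtain ⟨ha4, hb4, hc4, hd4⟩ := hz _ h41 h42
    obtain ⟨ha5, hb5, hc5, hd5⟩ := hz _ h51 h52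
    obtain ⟨ha6, hb6, hc6, hd6⟩ := hz _ h61 h62
    have hQ1 : (1:ℤ) ≤ (Q:ℤ) := le_trans ha1 hb1
    have hM1bd : |M1 p| ≤ 3 * (Q:ℤ) + 3 * (Q:ℤ)^2 := by
      rw [abs_le]
      constructor <;> (simp only [hM1, hpdef]; linarith [sq_nonneg ((Q:ℤ))])
    have hM2bd : |M2 p| ≤ 3 * (Q:ℤ) + 3 * (Q:ℤ)^2 := by
      rw [abs_le]
      constructor <;> (simp only [hM2, hpdef]; linarith)
    by_cases h0 : M1 p = 0 ∧ M2 p = 0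
    · have e1 : ∫ x in s₁, E₁ (M1 p) x ∂ν₁ = (c₁ : ℂ) := by
        rw [h0.1, ← hc₁]
        exact integral_congr_ae (Filter.Eventually.of_forall fun x => hE₁0 x)
      have e2 : ∫ y in s₂, E₂ (M2 p) y ∂ν₂ = (c₂ : ℂ) := by
        rw [h0.2, ← hc₂]
        exact integral_congr_ae (Filter.Eventually.of_forall fun y => hE₂0 y)
      rw [hint, e1, e2, if_pos h0]
      have : ((A p : ℝ) : ℂ) * ((c₁ : ℂ) * (c₂ : ℂ)) = ((A p * (c₁ * c₂) : ℝ) : ℂ) := by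
        push_cast; ring
      rw [this, Complex.ofReal_re]
      ring
    · rw [if_neg h0, hint]
      rcases not_and_or.mp h0 with h | h
      · rw [horth₁ (M1 p) h hM1bd]
        simp
      · rw [horth₂ (M2 p) h hM2bd]
        simp
  calc ∫ x, (∑ p ∈ P, T p x).re ∂π
      = (∫ x, (∑ p ∈ P, T p x) ∂π).re := by
        simpa using integral_re (integrable_finset_sum P hTint)
    _ = (∑ p ∈ P, ∫ x, T p x ∂π).re := by rw [integral_finset_sum P hTint]
    _ = ∑ p ∈ P, (∫ x, T p x ∂π).re := by rw [Complex.re_sum]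
    _ = _ := Finset.sum_congr rfl hmain
end Key


lemma torus_one : ∫ y in Set.Icc (0:ℝ) 1, (1:ℂ) = ((1:ℝ):ℂ) := by
  rw [setIntegral_const]
  simp [Real.volume_Icc]

lemma torus_orth (m : ℤ) (hm : m ≠ 0) :
    ∫ y in Set.Icc (0:ℝ) 1, Complex.exp (2 * Real.pi * Complex.I * ((m:ℂ) * (y:ℂ))) = 0 := by
  set c : ℂ := 2 * Real.pi * Complex.I * (m : ℂ) with hc
  have hc0 : c ≠ 0 := by
    rw [hc]
    apply mul_ne_zero
    apply mul_ne_zero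
    apply mul_ne_zero
    · norm_num
    · exact_mod_cast Complex.ofReal_ne_zero.mpr Real.pi_ne_zero
    · exact Complex.I_ne_zero
    · exact_mod_cast Int.cast_ne_zero.mpr hm
  have hfun : ∀ y : ℝ, Complex.exp (2 * Real.pi * Complex.I * ((m:ℂ) * (y:ℂ)))
      = Complex.exp (c * (y:ℂ)) := by
    intro y; rw [hc]; ring_nf
  simp only [hfun]
  rw [MeasureTheory.integral_Icc_eq_integral_Ioc, ← intervalIntegral.integral_of_le zero_le_one,
    integral_exp_mul_complex hc0]
  have h1 : Complex.exp (c * (1:ℝ)) = 1 := by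
    rw [Complex.ofReal_one, mul_one, hc]
    rw [show (2 * Real.pi * Complex.I * (m:ℂ)) = (m:ℂ) * (2 * Real.pi * Complex.I) by ring]
    exact Complex.exp_int_mul_two_pi_mul_I m
  have h0 : Complex.exp (c * (0:ℝ)) = 1 := by
    simp
  rw [h1, h0]
  simp

/-- For real `a_1, …, a_{q^t}`,
`∫_{max(|x₁|,|x₂|) ≤ q^{10t}} |∑_n a_n χ(n x₁ + n² x₂)|⁶ dμ²
  = q^{20t} ∫_{[0,1]²} |∑_n a_n e(n y₁ + n² y₂)|⁶ dy`. -/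
theorem qadic_L6_eq_torus_L6 (q : ℕ) [Fact q.Prime] (hq2 : q ≠ 2)
    (μ : Measure ℚ_[q]) [μ.IsAddHaarMeasure] [SigmaFinite μ]
    (hμ : μ {x : ℚ_[q] | ‖x‖ ≤ 1} = 1)
    (χ : ℚ_[q] → ℂ)
    (hχ_mul : ∀ x y : ℚ_[q], χ (x + y) = χ x * χ y)
    (hχ_norm : ∀ x : ℚ_[q], ‖χ x‖ = 1)
    (hχ_triv : ∀ x : ℚ_[q], ‖x‖ ≤ 1 → χ x = 1)
    (hχ_nontriv : ∃ x : ℚ_[q], ‖x‖ ≤ (q : ℝ) ∧ χ x ≠ 1)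
    (t : ℕ) (ht : 1 ≤ t) (a : ℕ → ℝ) :
    ∫ x in {x : ℚ_[q] × ℚ_[q] | max ‖x.1‖ ‖x.2‖ ≤ (q : ℝ) ^ ((10 * t : ℕ) : ℤ)},
        ‖∑ n ∈ Finset.Icc 1 (q ^ t),
            (a n : ℂ) * χ ((n : ℚ_[q]) * x.1 + (n : ℚ_[q]) ^ 2 * x.2)‖ ^ 6 ∂(μ.prod μ)
      = (q : ℝ) ^ ((20 * t : ℕ) : ℤ) *
          ∫ y : ℝ × ℝ in Set.Icc (0 : ℝ) 1 ×ˢ Set.Icc (0 : ℝ) 1,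
            ‖∑ n ∈ Finset.Icc 1 (q ^ t),
                (a n : ℂ) * Complex.exp (2 * Real.pi * Complex.I *
                  ((n : ℂ) * (y.1 : ℂ) + (n : ℂ) ^ 2 * (y.2 : ℂ)))‖ ^ 6 := by
  classical
  have hqp : q.Prime := Fact.out
  have hq3 : 3 ≤ q := by
    have := hqp.two_le
    rcases Nat.lt_or_ge q 3 with h | h
    · interval_cases q <;> simp_all
    · exact h
  have hq1 : 1 < q := hqp.one_lt
  -- q-adic side characters
  set Ep : ℤ → ℚ_[q] → ℂ := fun m x => χ ((m : ℚ_[q]) * x) with hEp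
  -- basic χ facts
  have hχ0 : χ 0 = 1 := hχ_triv 0 (by simp)
  have hχne : ∀ z : ℚ_[q], χ z ≠ 0 := by
    intro z h
    have := hχ_norm z
    rw [h, norm_zero] at this
    exact one_ne_zero this.symm
  have hχconj : ∀ z : ℚ_[q], (starRingEnd ℂ) (χ z) = χ (-z) := by
    intro z
    have h1 : χ z * χ (-z) = 1 := by
      rw [← hχ_mul]; simp [hχ0]
    have h2 : (starRingEnd ℂ) (χ z) * χ z = 1 := by
      rw [mul_comm, Complex.mul_conj, Complex.normSq_eq_norm_sq, hχ_norm]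
      norm_num
    calc (starRingEnd ℂ) (χ z) = (starRingEnd ℂ) (χ z) * (χ z * χ (-z)) := by rw [h1, mul_one]
      _ = ((starRingEnd ℂ) (χ z) * χ z) * χ (-z) := by ring
      _ = χ (-z) := by rw [h2, one_mul]
  have hEadd : ∀ (m m' : ℤ) (x : ℚ_[q]), Ep (m + m') x = Ep m x * Ep m' x := by
    intro m m' x
    rw [hEp]
    simp only []
    rw [show ((m + m' : ℤ) : ℚ_[q]) * x = (m : ℚ_[q]) * x + (m' : ℚ_[q]) * x by push_cast; ring]
    exact hχ_mul _ _
  have hEconj : ∀ (m : ℤ) (x : ℚ_[q]), (starRingEnd ℂ) (Ep m x) = Ep (-m) x := by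
    intro m x
    rw [hEp]
    simp only []
    rw [hχconj]
    congr 1
    push_cast
    ring
  have hEnorm : ∀ (m : ℤ) (x : ℚ_[q]), ‖Ep m x‖ = 1 := fun m x => hχ_norm _
  have hEmeas : ∀ m : ℤ, Measurable (Ep m) := by
    intro m
    exact ((char_cont q χ hχ_mul hχ_triv).comp (continuous_const.mul continuous_id)).measurable
  -- the ball
  set B : Set ℚ_[q] := {x : ℚ_[q] | ‖x‖ ≤ (q : ℝ) ^ ((10 * t : ℕ) : ℤ)} with hB
  have hBmeasure : μ B = ((q ^ (10 * t) : ℕ) : ENNReal) := ball_meas q μ hμ (10 * t)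
  have hBfin : μ B < ⊤ := by rw [hBmeasure]; exact ENNReal.natCast_lt_top _
  have hBone : ∫ x in B, (1 : ℂ) ∂μ = (((q ^ (10 * t) : ℕ) : ℝ) : ℂ) := by
    rw [setIntegral_const, measureReal_def, hBmeasure]
    simp
  -- arithmetic bound
  set Q : ℕ := q ^ t with hQ
  have hbound : 3 * Q + 3 * Q ^ 2 < q ^ (10 * t) := by
    have e2 : Q ^ 2 = q ^ (2 * t) := by rw [hQ, ← pow_mul]; ring_nf
    have h3 : q ^ t ≤ q ^ (2 * t) := Nat.pow_le_pow_right (by omega) (by omega)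
    have h4 : 3 ^ 8 ≤ q ^ (8 * t) :=
      le_trans (Nat.pow_le_pow_left hq3 8) (Nat.pow_le_pow_right (by omega) (by omega))
    have h5 : 1 ≤ q ^ (2 * t) := Nat.one_le_pow _ _ (by omega)
    have e1 : q ^ (10 * t) = q ^ (2 * t) * q ^ (8 * t) := by rw [← pow_add]; ring_nf
    rw [e1, e2, hQ]
    nlinarith
  have horthp : ∀ m : ℤ, m ≠ 0 → |m| ≤ 3 * Q + 3 * Q ^ 2 → ∫ x in B, Ep m x ∂μ = 0 := by
    intro m hm hmb
    have hnd : ¬ ((q : ℤ) ^ (10 * t) ∣ m) := by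
      intro hdvd
      have h1 : (q : ℤ) ^ (10 * t) ≤ |m| := Int.le_of_dvd (abs_pos.mpr hm) ((dvd_abs _ _).mpr hdvd)
      have h2 : ((3 * Q + 3 * Q ^ 2 : ℕ) : ℤ) < ((q ^ (10 * t) : ℕ) : ℤ) := by exact_mod_cast hbound
      have h3 : ((q ^ (10 * t) : ℕ) : ℤ) = (q : ℤ) ^ (10 * t) := by push_cast; ring
      have h4 : |m| ≤ ((3 * Q + 3 * Q ^ 2 : ℕ) : ℤ) := by push_cast; push_cast at hmb; linarith
      omega
    have hlt : (q : ℝ) ^ (-((10 * t : ℕ) : ℤ)) < ‖((m : ℤ) : ℚ_[q])‖ := by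
      rw [← not_le]
      intro hle
      exact hnd ((Padic.norm_int_le_pow_iff_dvd m (10 * t)).mp hle)
    exact char_int_zero q μ χ hχ_mul hχ_norm hχ_triv hχ_nontriv (10 * t) (m : ℚ_[q]) hlt
  -- region is a product
  have hreg : {x : ℚ_[q] × ℚ_[q] | max ‖x.1‖ ‖x.2‖ ≤ (q : ℝ) ^ ((10 * t : ℕ) : ℤ)} = B ×ˢ B := by
    ext x
    simp only [Set.mem_setOf_eq, Set.mem_prod, hB, max_le_iff]
  -- q-adic side via key_L6
  have hqside : ∫ x in {x : ℚ_[q] × ℚ_[q] | max ‖x.1‖ ‖x.2‖ ≤ (q : ℝ) ^ ((10 * t : ℕ) : ℤ)},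
        ‖∑ n ∈ Finset.Icc 1 (q ^ t),
            (a n : ℂ) * χ ((n : ℚ_[q]) * x.1 + (n : ℚ_[q]) ^ 2 * x.2)‖ ^ 6 ∂(μ.prod μ)
      = ∑ p ∈ (Finset.Icc 1 Q) ×ˢ (Finset.Icc 1 Q) ×ˢ (Finset.Icc 1 Q) ×ˢ (Finset.Icc 1 Q) ×ˢ
            (Finset.Icc 1 Q) ×ˢ (Finset.Icc 1 Q),
          (if ((p.2.2.2.2.2 : ℤ) + p.2.2.2.2.1 + p.2.2.2.1 - p.2.2.1 - p.2.1 - p.1 = 0 ∧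
               (p.2.2.2.2.2 : ℤ) ^ 2 + (p.2.2.2.2.1 : ℤ) ^ 2 + (p.2.2.2.1 : ℤ) ^ 2
                 - (p.2.2.1 : ℤ) ^ 2 - (p.2.1 : ℤ) ^ 2 - (p.1 : ℤ) ^ 2 = 0)
            then ((q ^ (10 * t) : ℕ) : ℝ) * ((q ^ (10 * t) : ℕ) : ℝ) *
                (a p.2.2.2.2.2 * a p.2.2.2.2.1 * a p.2.2.2.1 * a p.2.2.1 * a p.2.1 * a p.1)
            else 0) := by
    rw [hreg]
    have hfun : ∀ x : ℚ_[q] × ℚ_[q],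
        ‖∑ n ∈ Finset.Icc 1 (q ^ t),
            (a n : ℂ) * χ ((n : ℚ_[q]) * x.1 + (n : ℚ_[q]) ^ 2 * x.2)‖ ^ 6
        = ‖∑ n ∈ Finset.Icc 1 Q,
            (a n : ℂ) * (Ep (n : ℤ) x.1 * Ep ((n : ℤ) ^ 2) x.2)‖ ^ 6 := by
      intro x
      rw [hQ]
      congr 2
      refine Finset.sum_congr rfl fun n _ => ?_
      congr 1
      rw [hEp]
      simp only []
      rw [← hχ_mul]
      congr 1
      all_goals push_cast; ring
    rw [show (fun x : ℚ_[q] × ℚ_[q] =>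
        ‖∑ n ∈ Finset.Icc 1 (q ^ t),
            (a n : ℂ) * χ ((n : ℚ_[q]) * x.1 + (n : ℚ_[q]) ^ 2 * x.2)‖ ^ 6)
      = fun x : ℚ_[q] × ℚ_[q] => ‖∑ n ∈ Finset.Icc 1 Q,
            (a n : ℂ) * (Ep (n : ℤ) x.1 * Ep ((n : ℤ) ^ 2) x.2)‖ ^ 6 from funext hfun]
    exact key_L6 μ μ B B hBfin hBfin Ep Ep hEadd hEadd hEconj hEconj hEnorm hEnorm hEmeas hEmeas
      Q a _ _ hBone hBone horthp horthp
  -- torus side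
  set Et : ℤ → ℝ → ℂ := fun m y => Complex.exp (2 * Real.pi * Complex.I * ((m : ℂ) * (y : ℂ)))
    with hEt
  have hEtadd : ∀ (m m' : ℤ) (y : ℝ), Et (m + m') y = Et m y * Et m' y := by
    intro m m' y
    rw [hEt]
    simp only []
    rw [← Complex.exp_add]
    congr 1
    push_cast
    ring
  have hEtconj : ∀ (m : ℤ) (y : ℝ), (starRingEnd ℂ) (Et m y) = Et (-m) y := by
    intro m y
    rw [hEt]
    simp only []
    rw [← Complex.exp_conj]
    congr 1
    simp only [map_mul, Complex.conj_I, Complex.conj_ofReal, map_ofNat, map_intCast]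
    push_cast
    ring
  have hEtnorm : ∀ (m : ℤ) (y : ℝ), ‖Et m y‖ = 1 := by
    intro m y
    rw [hEt]
    simp only []
    rw [show (2 * (Real.pi:ℂ) * Complex.I * ((m : ℂ) * (y : ℂ)))
        = ((2 * Real.pi * (m:ℝ) * y : ℝ) : ℂ) * Complex.I by push_cast; ring]
    rw [Complex.norm_exp_ofReal_mul_I]
  have hEtmeas : ∀ m : ℤ, Measurable (Et m) := by
    intro m
    apply Continuous.measurable
    exact Complex.continuous_exp.comp (continuous_const.mul
      (continuous_const.mul Complex.continuous_ofReal))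
  have hIccfin : (volume : Measure ℝ) (Set.Icc (0:ℝ) 1) < ⊤ := by
    rw [Real.volume_Icc]; simp
  have htorth : ∀ m : ℤ, m ≠ 0 → |m| ≤ 3 * Q + 3 * Q ^ 2 →
      ∫ y in Set.Icc (0:ℝ) 1, Et m y ∂(volume : Measure ℝ) = 0 := by
    intro m hm _
    exact torus_orth m hm
  have htside : ∫ y : ℝ × ℝ in Set.Icc (0 : ℝ) 1 ×ˢ Set.Icc (0 : ℝ) 1,
            ‖∑ n ∈ Finset.Icc 1 (q ^ t),
                (a n : ℂ) * Complex.exp (2 * Real.pi * Complex.I *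
                  ((n : ℂ) * (y.1 : ℂ) + (n : ℂ) ^ 2 * (y.2 : ℂ)))‖ ^ 6
      = ∑ p ∈ (Finset.Icc 1 Q) ×ˢ (Finset.Icc 1 Q) ×ˢ (Finset.Icc 1 Q) ×ˢ (Finset.Icc 1 Q) ×ˢ
            (Finset.Icc 1 Q) ×ˢ (Finset.Icc 1 Q),
          (if ((p.2.2.2.2.2 : ℤ) + p.2.2.2.2.1 + p.2.2.2.1 - p.2.2.1 - p.2.1 - p.1 = 0 ∧
               (p.2.2.2.2.2 : ℤ) ^ 2 + (p.2.2.2.2.1 : ℤ) ^ 2 + (p.2.2.2.1 : ℤ) ^ 2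
                 - (p.2.2.1 : ℤ) ^ 2 - (p.2.1 : ℤ) ^ 2 - (p.1 : ℤ) ^ 2 = 0)
            then (1:ℝ) * (1:ℝ) *
                (a p.2.2.2.2.2 * a p.2.2.2.2.1 * a p.2.2.2.1 * a p.2.2.1 * a p.2.1 * a p.1)
            else 0) := by
    have hfun : ∀ y : ℝ × ℝ,
        ‖∑ n ∈ Finset.Icc 1 (q ^ t),
                (a n : ℂ) * Complex.exp (2 * Real.pi * Complex.I *
                  ((n : ℂ) * (y.1 : ℂ) + (n : ℂ) ^ 2 * (y.2 : ℂ)))‖ ^ 6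
        = ‖∑ n ∈ Finset.Icc 1 Q,
            (a n : ℂ) * (Et (n : ℤ) y.1 * Et ((n : ℤ) ^ 2) y.2)‖ ^ 6 := by
      intro y
      rw [hQ]
      congr 2
      refine Finset.sum_congr rfl fun n _ => ?_
      congr 1
      rw [hEt]
      simp only []
      rw [← Complex.exp_add]
      congr 1
      push_cast
      ring
    rw [show (fun y : ℝ × ℝ =>
        ‖∑ n ∈ Finset.Icc 1 (q ^ t),
                (a n : ℂ) * Complex.exp (2 * Real.pi * Complex.I *
                  ((n : ℂ) * (y.1 : ℂ) + (n : ℂ) ^ 2 * (y.2 : ℂ)))‖ ^ 6)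
      = fun y : ℝ × ℝ => ‖∑ n ∈ Finset.Icc 1 Q,
            (a n : ℂ) * (Et (n : ℤ) y.1 * Et ((n : ℤ) ^ 2) y.2)‖ ^ 6 from funext hfun]
    rw [MeasureTheory.Measure.volume_eq_prod]
    exact key_L6 volume volume (Set.Icc (0:ℝ) 1) (Set.Icc (0:ℝ) 1) hIccfin hIccfin
      Et Et hEtadd hEtadd hEtconj hEtconj hEtnorm hEtnorm hEtmeas hEtmeas
      Q a 1 1 torus_one torus_one htorth htorth
  rw [hqside, htside, Finset.mul_sum]
  refine Finset.sum_congr rfl fun p _ => ?_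
  rw [mul_ite, mul_zero]
  congr 1
  have hc : ((q ^ (10 * t) : ℕ) : ℝ) * ((q ^ (10 * t) : ℕ) : ℝ) = (q : ℝ) ^ ((20 * t : ℕ) : ℤ) := by
    rw [zpow_natCast]
    push_cast
    rw [← pow_add]
    congr 1
    ring
  rw [← hc]
  ring
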